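/- Let Q be a real symmetric n×n matrix with smallest eigenvalue λ_min(Q) < 0, let c, a_1, …, a_m ∈ R^n and b ∈ R^m, and assume the feasible set {x : x^T x ≤ 1, a_i^T x ≤ b_i, i = 1, …, m} has a strictly feasible point (Slater condition). If the n×(n+m) matrix [Q − λ_min(Q) I_n, a_1, …, a_m] obtained by appending the columns a_1, …, a_m to Q − λ_min(Q) I_n has rank at most n − 1, then v(T_m) = v(P): the optimal value of minimizing (1/2) x^T Q x + c^T x over {x : x^T x ≤ 1, a_i^T x ≤ b_i ∀i} equals the optimal value of its semidefinite relaxation: minimize (1/2) trace(Q X) + c^T x over pairs (X, x) with X an n×n symmetric matrix, subject to trace(X) ≤ 1, a_i^T x ≤ b_i for i = 1, …, m, and the (n+1)×(n+1) block matrix [[X, x],[x^T, 1]] positive semidefinite. -/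

import Mathlib

open Matrix

lemma aux_trace_outer {n : ℕ} (Q : Matrix (Fin n) (Fin n) ℝ) (x : Fin n → ℝ) :
    (Q * vecMulVec x x).trace = x ⬝ᵥ Q.mulVec x := by
  simp only [Matrix.trace, Matrix.diag, Matrix.mul_apply, vecMulVec_apply,
    dotProduct, Matrix.mulVec, Finset.mul_sum]
  exact Finset.sum_congr rfl fun i _ => Finset.sum_congr rfl fun j _ => by ring

lemma aux_psd_trace_nonneg {k : ℕ} {N : Matrix (Fin k) (Fin k) ℝ} (h : N.PosSemidef) :
    0 ≤ N.trace := by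
  refine Finset.sum_nonneg fun i _ => ?_
  have := h.dotProduct_mulVec_nonneg (Pi.single i 1)
  simpa [Matrix.mulVec_single, dotProduct, Pi.single_apply] using this

open scoped MatrixOrder Matrix.Norms.L2Operator in
lemma aux_trace_mul_psd_nonneg {k : ℕ} {S N : Matrix (Fin k) (Fin k) ℝ}
    (hS : S.PosSemidef) (hN : N.PosSemidef) : 0 ≤ (S * N).trace := by
  obtain ⟨B, hB⟩ := CStarAlgebra.nonneg_iff_eq_star_mul_self.mp hS.nonneg
  have h1 : S * N = Bᴴ * (B * N) := by rw [hB, Matrix.mul_assoc]; rfl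
  rw [h1, Matrix.trace_mul_comm]
  exact aux_psd_trace_nonneg (hN.mul_mul_conjTranspose_same B)

lemma aux_outer_block_psd {n : ℕ} (x : Fin n → ℝ) :
    (Matrix.fromBlocks (vecMulVec x x) (Matrix.replicateCol (Fin 1) x) (Matrix.replicateRow (Fin 1) x)
      (1 : Matrix (Fin 1) (Fin 1) ℝ)).PosSemidef := by
  have h : Matrix.fromBlocks (vecMulVec x x) (Matrix.replicateCol (Fin 1) x) (Matrix.replicateRow (Fin 1) x)
      (1 : Matrix (Fin 1) (Fin 1) ℝ)
      = (Matrix.replicateRow (Fin 1) (Sum.elim x (fun _ => 1)))ᴴ * Matrix.replicateRow (Fin 1) (Sum.elim x fun _ => 1) := by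
    ext i j
    obtain (i|i) := i <;> obtain (j|j) := j <;>
      simp [Matrix.mul_apply, Matrix.conjTranspose_apply, Matrix.replicateRow_apply, Matrix.replicateCol_apply,
        vecMulVec_apply, Matrix.one_apply]
    exact (Subsingleton.elim i j) ▸ (by simp)
  rw [h]
  exact posSemidef_conjTranspose_mul_self _

lemma aux_block_quad {n : ℕ} {X : Matrix (Fin n) (Fin n) ℝ} {x : Fin n → ℝ}
    (hP : (Matrix.fromBlocks X (Matrix.replicateCol (Fin 1) x) (Matrix.replicateRow (Fin 1) x)
      (1 : Matrix (Fin 1) (Fin 1) ℝ)).PosSemidef) (y : Fin n → ℝ) (t : ℝ) :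
    0 ≤ y ⬝ᵥ X.mulVec y + t * (y ⬝ᵥ x) + t * (x ⬝ᵥ y) + t * t := by
  have h := hP.dotProduct_mulVec_nonneg (Sum.elim y (fun _ => t))
  simp only [star_trivial, Matrix.mulVec, dotProduct, Fintype.sum_sum_type,
    Fin.sum_univ_one, Sum.elim_inl, Sum.elim_inr,
    Matrix.fromBlocks_apply₁₁, Matrix.fromBlocks_apply₁₂, Matrix.fromBlocks_apply₂₁,
    Matrix.fromBlocks_apply₂₂, Matrix.replicateCol_apply, Matrix.replicateRow_apply, Matrix.one_apply_eq,
    mul_add, Finset.sum_add_distrib, one_mul] at h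
  simp only [Matrix.mulVec, dotProduct]
  have e1 : ∑ i, y i * (x i * t) = t * ∑ i, y i * x i := by
    rw [Finset.mul_sum]; exact Finset.sum_congr rfl fun i _ => by ring
  have e2 : t * ∑ i, x i * y i = t * ∑ i, x i * y i := rfl
  linarith [h, e1.symm.le]

lemma aux_schur {n : ℕ} {X : Matrix (Fin n) (Fin n) ℝ} {x : Fin n → ℝ}
    (hP : (Matrix.fromBlocks X (Matrix.replicateCol (Fin 1) x) (Matrix.replicateRow (Fin 1) x)
      (1 : Matrix (Fin 1) (Fin 1) ℝ)).PosSemidef) (y : Fin n → ℝ) :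
    (x ⬝ᵥ y) * (x ⬝ᵥ y) ≤ y ⬝ᵥ X.mulVec y := by
  have h := aux_block_quad hP y (-(x ⬝ᵥ y))
  rw [dotProduct_comm y x] at h
  nlinarith [h]

lemma aux_exists_ker {n m : ℕ} (hn : 0 < n) (M : Matrix (Fin n) (Fin n ⊕ Fin m) ℝ)
    (h : M.rank ≤ n - 1) : ∃ v : Fin n → ℝ, v ≠ 0 ∧ Mᵀ.mulVec v = 0 := by
  have hrn : LinearMap.ker Mᵀ.mulVecLin ≠ ⊥ := by
    intro hbot
    have h1 := LinearMap.finrank_range_add_finrank_ker Mᵀ.mulVecLin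
    rw [hbot, finrank_bot] at h1
    have h2 : Mᵀ.rank = n := by
      simpa [Matrix.rank] using h1
    rw [Matrix.rank_transpose] at h2
    omega
  obtain ⟨v, hv, hv0⟩ := Submodule.exists_mem_ne_zero_of_ne_bot hrn
  exact ⟨v, hv0, hv⟩

lemma aux_outer_quad {n : ℕ} (x z : Fin n → ℝ) :
    z ⬝ᵥ (vecMulVec x x).mulVec z = (x ⬝ᵥ z) * (x ⬝ᵥ z) := by
  simp only [Matrix.mulVec, vecMulVec_apply, dotProduct]
  rw [Finset.sum_mul]
  refine Finset.sum_congr rfl fun i _ => ?_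
  rw [Finset.mul_sum, Finset.mul_sum]
  exact Finset.sum_congr rfl fun j _ => by ring

lemma aux_herm_of_symm {k : ℕ} {A : Matrix (Fin k) (Fin k) ℝ} (h : A.IsSymm) :
    A.IsHermitian := by
  unfold Matrix.IsHermitian
  ext i j
  simpa [Matrix.conjTranspose_apply] using congrFun (congrFun h i) j

lemma aux_vecMulVec_isSymm {k : ℕ} (x : Fin k → ℝ) : (vecMulVec x x).IsSymm := by
  ext i j
  simp [Matrix.transpose_apply, vecMulVec_apply, mul_comm]

lemma aux_trace_vecMulVec {k : ℕ} (x : Fin k → ℝ) : (vecMulVec x x).trace = x ⬝ᵥ x := by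
  simp [Matrix.trace, Matrix.diag, vecMulVec_apply, dotProduct]

lemma aux_symm_dot {k : ℕ} {Q : Matrix (Fin k) (Fin k) ℝ} (hQ : Q.IsSymm)
    (u v : Fin k → ℝ) : u ⬝ᵥ Q.mulVec v = v ⬝ᵥ Q.mulVec u := by
  rw [Matrix.dotProduct_mulVec]
  conv_lhs => rw [← hQ]
  rw [Matrix.vecMul_transpose, dotProduct_comm]

lemma aux_sub_outer_psd {k : ℕ} {X : Matrix (Fin k) (Fin k) ℝ} {x : Fin k → ℝ}
    (hXs : X.IsSymm)
    (hP : (Matrix.fromBlocks X (Matrix.replicateCol (Fin 1) x) (Matrix.replicateRow (Fin 1) x)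
      (1 : Matrix (Fin 1) (Fin 1) ℝ)).PosSemidef) :
    (X - vecMulVec x x).PosSemidef := by
  refine Matrix.PosSemidef.of_dotProduct_mulVec_nonneg ?_ ?_
  · exact (aux_herm_of_symm hXs).sub (aux_herm_of_symm (aux_vecMulVec_isSymm x))
  · intro z
    rw [star_trivial, Matrix.sub_mulVec, dotProduct_sub, aux_outer_quad]
    have := aux_schur hP z
    linarith

lemma aux_key {n : ℕ} (Q : Matrix (Fin n) (Fin n) ℝ) (hQsymm : Q.IsSymm) (c : Fin n → ℝ)
    (lam : ℝ) (hlam_neg : lam < 0)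
    (hSpsd : (Q - lam • (1 : Matrix (Fin n) (Fin n) ℝ)).PosSemidef)
    (w : Fin n → ℝ) (hww : w ⬝ᵥ w = 1) (hQw : Q.mulVec w = lam • w)
    (X : Matrix (Fin n) (Fin n) ℝ) (x : Fin n → ℝ) (hXs : X.IsSymm) (hXtr : X.trace ≤ 1)
    (hP : (Matrix.fromBlocks X (Matrix.replicateCol (Fin 1) x) (Matrix.replicateRow (Fin 1) x)
      (1 : Matrix (Fin 1) (Fin 1) ℝ)).PosSemidef) :
    ∃ t : ℝ, (x + t • w) ⬝ᵥ (x + t • w) ≤ 1 ∧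
      (1/2) * ((x + t • w) ⬝ᵥ Q.mulVec (x + t • w)) + c ⬝ᵥ (x + t • w) ≤
        (1/2) * (Q * X).trace + c ⬝ᵥ x := by
  have hdotself : ∀ z : Fin n → ℝ, (0:ℝ) ≤ z ⬝ᵥ z :=
    fun z => Finset.sum_nonneg fun i _ => mul_self_nonneg _
  set s := x ⬝ᵥ x with hs_def
  have hpsdN : (X - vecMulVec x x).PosSemidef := aux_sub_outer_psd hXs hP
  have hs_tr : s ≤ X.trace := by
    have h0 := aux_psd_trace_nonneg hpsdN
    rw [Matrix.trace_sub, aux_trace_vecMulVec] at h0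
    linarith
  have hs1 : s ≤ 1 := hs_tr.trans hXtr
  have hs0 : (0:ℝ) ≤ s := hdotself x
  -- trace inequality
  have htr : x ⬝ᵥ Q.mulVec x + lam * (1 - s) ≤ (Q * X).trace := by
    have h1 : (0:ℝ) ≤ ((Q - lam • 1) * (X - vecMulVec x x)).trace :=
      aux_trace_mul_psd_nonneg hSpsd hpsdN
    have hexp : (Q - lam • (1 : Matrix (Fin n) (Fin n) ℝ)) * (X - vecMulVec x x)
        = Q * X - Q * vecMulVec x x - lam • X + lam • vecMulVec x x := by
      simp only [Matrix.sub_mul, Matrix.mul_sub, Matrix.smul_mul, Matrix.one_mul]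
      abel
    rw [hexp] at h1
    rw [Matrix.trace_add, Matrix.trace_sub, Matrix.trace_sub, Matrix.trace_smul,
      Matrix.trace_smul, aux_trace_outer, aux_trace_vecMulVec, smul_eq_mul, smul_eq_mul] at h1
    have h2 : lam * 1 ≤ lam * X.trace := by
      apply mul_le_mul_of_nonpos_left hXtr (le_of_lt hlam_neg)
    nlinarith
  -- choose t
  set α := x ⬝ᵥ w with hα_def
  set r := Real.sqrt (α ^ 2 + (1 - s)) with hr_def
  have hr_arg : (0:ℝ) ≤ α ^ 2 + (1 - s) := by nlinarith [sq_nonneg α]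
  have hr0 : 0 ≤ r := Real.sqrt_nonneg _
  have hr2 : r ^ 2 = α ^ 2 + (1 - s) := Real.sq_sqrt hr_arg
  have hrα : |α| ≤ r := by
    rw [hr_def, ← Real.sqrt_sq_eq_abs]
    exact Real.sqrt_le_sqrt (by linarith)
  set t := if 0 ≤ c ⬝ᵥ w then -α - r else -α + r with ht_def
  have ht2 : t * t + 2 * t * α = 1 - s := by
    rcases le_or_gt 0 (c ⬝ᵥ w) with h | h
    · rw [ht_def, if_pos h]; nlinarith
    · rw [ht_def, if_neg (not_le.mpr h)]; nlinarith
  have htc : t * (c ⬝ᵥ w) ≤ 0 := by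
    rcases le_or_gt 0 (c ⬝ᵥ w) with h | h
    · have ht_le : t ≤ 0 := by
        rw [ht_def, if_pos h]
        have := neg_abs_le α
        linarith [abs_le.mp hrα]
      exact mul_nonpos_of_nonpos_of_nonneg ht_le h
    · have ht_ge : 0 ≤ t := by
        rw [ht_def, if_neg (not_le.mpr h)]
        have := le_abs_self α
        linarith
      exact mul_nonpos_of_nonneg_of_nonpos ht_ge (le_of_lt h)
  refine ⟨t, ?_, ?_⟩
  · -- feasibility: norm
    have : (x + t • w) ⬝ᵥ (x + t • w) = s + 2 * t * α + t * t := by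
      rw [dotProduct_add, add_dotProduct, add_dotProduct, dotProduct_smul, smul_dotProduct,
        smul_dotProduct, dotProduct_smul, dotProduct_comm w x]
      simp only [smul_eq_mul, hww, ← hα_def, ← hs_def]
      ring
    rw [this]; linarith
  · -- objective
    have hyq : (x + t • w) ⬝ᵥ Q.mulVec (x + t • w)
        = x ⬝ᵥ Q.mulVec x + 2 * (t * (lam * α)) + t * t * lam := by
      rw [Matrix.mulVec_add, Matrix.mulVec_smul, hQw]
      rw [dotProduct_add, add_dotProduct, add_dotProduct, dotProduct_smul, smul_dotProduct,
        smul_dotProduct, dotProduct_smul]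
      have hwx : w ⬝ᵥ Q.mulVec x = lam * α := by
        rw [aux_symm_dot hQsymm, hQw, dotProduct_smul, smul_eq_mul, ← hα_def]
      have hxw : x ⬝ᵥ (lam • w) = lam * α := by
        rw [dotProduct_smul, smul_eq_mul, ← hα_def]
      rw [hwx]
      simp only [smul_eq_mul, hxw, dotProduct_smul, hww, ← hα_def]
      ring
    have hcy : c ⬝ᵥ (x + t • w) = c ⬝ᵥ x + t * (c ⬝ᵥ w) := by
      rw [dotProduct_add, dotProduct_smul, smul_eq_mul]
    rw [hyq, hcy]
    nlinarith


/-- Improved dimension condition [NewDC] for exactness of the SDP relaxation of the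
extended trust region subproblem `(T_m)`: if `rank [Q - λ_min(Q) Iₙ, a₁, …, a_m] ≤ n - 1`
and Slater's condition holds, then `v(T_m) = v(P)`. -/
theorem stmt_14 {n m : ℕ} (Q : Matrix (Fin n) (Fin n) ℝ) (hQsymm : Q.IsSymm)
    (c : Fin n → ℝ) (a : Fin m → (Fin n → ℝ)) (b : Fin m → ℝ)
    (lam : ℝ) (hlam_neg : lam < 0)
    (hlam_ev : ∃ v : Fin n → ℝ, v ≠ 0 ∧ Q.mulVec v = lam • v)
    (hlam_min : ∀ x : Fin n → ℝ, lam * (x ⬝ᵥ x) ≤ x ⬝ᵥ Q.mulVec x)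
    (hslater : ∃ x : Fin n → ℝ, x ⬝ᵥ x < 1 ∧ ∀ i, a i ⬝ᵥ x < b i)
    (hrank : Matrix.rank (Matrix.of fun (i : Fin n) (j : Fin n ⊕ Fin m) =>
        Sum.elim (fun j' : Fin n => (Q - lam • 1) i j') (fun l : Fin m => a l i) j)
      ≤ n - 1) :
    sInf {v : ℝ | ∃ x : Fin n → ℝ,
        x ⬝ᵥ x ≤ 1 ∧ (∀ i, a i ⬝ᵥ x ≤ b i) ∧
        v = (1 / 2) * (x ⬝ᵥ Q.mulVec x) + c ⬝ᵥ x} =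
      sInf {v : ℝ | ∃ (X : Matrix (Fin n) (Fin n) ℝ) (x : Fin n → ℝ),
        X.IsSymm ∧ X.trace ≤ 1 ∧ (∀ i, a i ⬝ᵥ x ≤ b i) ∧
        (Matrix.fromBlocks X (Matrix.replicateCol (Fin 1) x) (Matrix.replicateRow (Fin 1) x) 1).PosSemidef ∧
        v = (1 / 2) * (Q * X).trace + c ⬝ᵥ x} := by
  classical
  set TS := {v : ℝ | ∃ x : Fin n → ℝ,
      x ⬝ᵥ x ≤ 1 ∧ (∀ i, a i ⬝ᵥ x ≤ b i) ∧
      v = (1 / 2) * (x ⬝ᵥ Q.mulVec x) + c ⬝ᵥ x} with hTS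
  set PS := {v : ℝ | ∃ (X : Matrix (Fin n) (Fin n) ℝ) (x : Fin n → ℝ),
      X.IsSymm ∧ X.trace ≤ 1 ∧ (∀ i, a i ⬝ᵥ x ≤ b i) ∧
      (Matrix.fromBlocks X (Matrix.replicateCol (Fin 1) x) (Matrix.replicateRow (Fin 1) x) 1).PosSemidef ∧
      v = (1 / 2) * (Q * X).trace + c ⬝ᵥ x} with hPS
  have hdotself : ∀ z : Fin n → ℝ, (0:ℝ) ≤ z ⬝ᵥ z :=
    fun z => Finset.sum_nonneg fun i _ => mul_self_nonneg _
  have hSpsd : (Q - lam • (1 : Matrix (Fin n) (Fin n) ℝ)).PosSemidef := by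
    refine Matrix.PosSemidef.of_dotProduct_mulVec_nonneg ?_ ?_
    · refine (aux_herm_of_symm hQsymm).sub (aux_herm_of_symm ?_)
      unfold Matrix.IsSymm
      rw [Matrix.transpose_smul, Matrix.transpose_one]
    · intro z
      rw [star_trivial, Matrix.sub_mulVec, dotProduct_sub, Matrix.smul_mulVec,
        Matrix.one_mulVec, dotProduct_smul, smul_eq_mul]
      linarith [hlam_min z]
  have hn : 0 < n := by
    rcases Nat.eq_zero_or_pos n with h | h
    · exfalso
      obtain ⟨v, hv0, -⟩ := hlam_ev
      exact hv0 (funext fun i => absurd i.2 (by omega))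
    · exact h
  obtain ⟨v, hv0, hvker⟩ := aux_exists_ker hn _ hrank
  have hSsymm' : ∀ i j : Fin n, (Q - lam • (1 : Matrix (Fin n) (Fin n) ℝ)) j i
      = (Q - lam • 1) i j := by
    intro i j
    have hq : Q j i = Q i j := by
      have := congrFun (congrFun hQsymm i) j
      simpa [Matrix.transpose_apply] using this
    by_cases h : i = j
    · subst h; rfl
    · simp [Matrix.sub_apply, Matrix.smul_apply, Matrix.one_apply, h, Ne.symm h, hq]
  have hSv : (Q - lam • (1 : Matrix (Fin n) (Fin n) ℝ)).mulVec v = 0 := by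
    ext j
    have h := congrFun hvker (Sum.inl j)
    simp only [Matrix.mulVec, dotProduct, Matrix.transpose_apply, Matrix.of_apply,
      Sum.elim_inl, Pi.zero_apply] at h ⊢
    rw [← h]
    exact Finset.sum_congr rfl fun i _ => by rw [hSsymm' i j]
  have hQv : Q.mulVec v = lam • v := by
    have h := hSv
    rw [Matrix.sub_mulVec, Matrix.smul_mulVec, Matrix.one_mulVec, sub_eq_zero] at h
    exact h
  have hav : ∀ l, a l ⬝ᵥ v = 0 := by
    intro l
    have h := congrFun hvker (Sum.inr l)
    simpa [Matrix.mulVec, dotProduct, Matrix.transpose_apply, Matrix.of_apply] using h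
  have hvv : 0 < v ⬝ᵥ v :=
    lt_of_le_of_ne (hdotself v) (Ne.symm fun h => hv0 (dotProduct_self_eq_zero.mp h))
  set w := (Real.sqrt (v ⬝ᵥ v))⁻¹ • v with hw
  have hnv0 : 0 < Real.sqrt (v ⬝ᵥ v) := Real.sqrt_pos.mpr hvv
  have hww : w ⬝ᵥ w = 1 := by
    rw [hw, smul_dotProduct, dotProduct_smul, smul_eq_mul, smul_eq_mul]
    rw [← Real.mul_self_sqrt hvv.le]
    field_simp
    rw [Real.sqrt_sq hnv0.le]
  have hQw : Q.mulVec w = lam • w := by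
    rw [hw, Matrix.mulVec_smul, hQv, smul_comm]
  have haw : ∀ l, a l ⬝ᵥ w = 0 := fun l => by
    rw [hw, dotProduct_smul, hav l, smul_zero]
  have hTlb : ∀ x' : Fin n → ℝ, x' ⬝ᵥ x' ≤ 1 →
      lam / 2 - (c ⬝ᵥ c + 1) / 2 ≤ (1/2) * (x' ⬝ᵥ Q.mulVec x') + c ⬝ᵥ x' := by
    intro x' hx'
    have h1 := hlam_min x'
    have h2 : (0:ℝ) ≤ (c + x') ⬝ᵥ (c + x') := hdotself _
    rw [dotProduct_add, add_dotProduct, add_dotProduct, dotProduct_comm x' c] at h2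
    nlinarith [hdotself x']
  have hPmem_of_T : ∀ x' : Fin n → ℝ, x' ⬝ᵥ x' ≤ 1 → (∀ i, a i ⬝ᵥ x' ≤ b i) →
      ((1/2) * (x' ⬝ᵥ Q.mulVec x') + c ⬝ᵥ x') ∈ PS := by
    intro x' h1 h2
    exact ⟨vecMulVec x' x', x', aux_vecMulVec_isSymm x',
      by rwa [aux_trace_vecMulVec], h2, aux_outer_block_psd x', by rw [aux_trace_outer]⟩
  have hkey : ∀ p ∈ PS, ∃ x' : Fin n → ℝ, x' ⬝ᵥ x' ≤ 1 ∧ (∀ i, a i ⬝ᵥ x' ≤ b i) ∧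
      (1/2) * (x' ⬝ᵥ Q.mulVec x') + c ⬝ᵥ x' ≤ p := by
    rintro p ⟨X, x, hXs, hXtr, hax, hpsd, rfl⟩
    obtain ⟨t, hfeas, hobj⟩ := aux_key Q hQsymm c lam hlam_neg hSpsd w hww hQw X x hXs hXtr hpsd
    refine ⟨x + t • w, hfeas, ?_, hobj⟩
    intro i
    rw [dotProduct_add, dotProduct_smul, haw i, smul_zero, add_zero]
    exact hax i
  obtain ⟨x0, hx0n, hx0a⟩ := hslater
  have hT_ne : TS.Nonempty := ⟨_, x0, hx0n.le, fun i => (hx0a i).le, rfl⟩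
  have hT_bdd : BddBelow TS := by
    refine ⟨lam / 2 - (c ⬝ᵥ c + 1) / 2, ?_⟩
    rintro q ⟨x', h1, h2, rfl⟩
    exact hTlb x' h1
  have hP_bdd : BddBelow PS := by
    refine ⟨lam / 2 - (c ⬝ᵥ c + 1) / 2, ?_⟩
    intro p hp
    obtain ⟨x', h1, h2, h3⟩ := hkey p hp
    exact le_trans (hTlb x' h1) h3
  have hP_ne : PS.Nonempty := ⟨_, hPmem_of_T x0 hx0n.le fun i => (hx0a i).le⟩
  apply le_antisymm
  · refine le_csInf hP_ne fun p hp => ?_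
    obtain ⟨x', h1, h2, h3⟩ := hkey p hp
    exact le_trans (csInf_le hT_bdd ⟨x', h1, h2, rfl⟩) h3
  · refine le_csInf hT_ne ?_
    rintro q ⟨x', h1, h2, rfl⟩
    exact csInf_le hP_bdd (hPmem_of_T x' h1 h2)
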